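/- arXiv:1010.2031 — 5 statements merged into one kernel-verified Lean document; each statement's English description precedes it below -/
import Mathlib

section
/- Equip the poset of contexts of A with the lower-set (downset) topology, in which a set of contexts is open precisely when it is downward closed under inclusion. Then: (a) the projection π : Σ* → contexts, (C,λ) ↦ C, is continuous; (b) for every clopen subobject S of the spectral presheaf (a family assigning to each context C a clopen subset S_C ⊆ Σ_C such that λ ∈ S_C and D ⊆ C imply λ|_D ∈ S_D), the set I(S) := {(C,λ) ∈ Σ : λ ∈ S_C} is open in Σ*; and (c) the map I is injective and satisfies I(S ∧ T) = I(S) ∩ I(T) and I(S ∨ T) = I(S) ∪ I(T), where (S ∧ T)_C := S_C ∩ T_C and (S ∨ T)_C := S_C ∪ T_C. -/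
open WeakDual

variable (A : Type*) [CStarAlgebra A]

/-- A classical context: a commutative unital closed star-subalgebra of `A`. -/
structure Context where
  carrier : Subalgebra ℂ A
  star_mem' : ∀ x ∈ carrier, star x ∈ carrier
  isClosed' : IsClosed (carrier : Set A)
  mul_comm' : ∀ x ∈ carrier, ∀ y ∈ carrier, x * y = y * x

variable {A}

/-- The Gelfand spectrum of a context: the character space of `C`. -/
abbrev Context.Spec (C : Context A) : Type _ := characterSpace ℂ C.carrier

/-- The inclusion of a smaller context into a larger one, as a continuous linear map. -/
def Context.inclCLM {D C : Context A} (h : D.carrier ≤ C.carrier) :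
    D.carrier →L[ℂ] C.carrier where
  toLinearMap := (Subalgebra.inclusion h).toLinearMap
  cont := continuous_induced_rng.mpr continuous_subtype_val

/-- Restriction of a character along an inclusion of contexts. -/
noncomputable def Context.restrictChar {D C : Context A} (h : D.carrier ≤ C.carrier)
    (lam : C.Spec) : D.Spec :=
  ⟨(lam : WeakDual ℂ C.carrier).comp (Context.inclCLM h), by
    constructor
    · intro h0
      have h1 : (lam : WeakDual ℂ C.carrier).comp (Context.inclCLM h) (1 : D.carrier) = 0 := by
        rw [h0]; rfl
      have h2 : (lam : WeakDual ℂ C.carrier).comp (Context.inclCLM h) (1 : D.carrier) = 1 := by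
        show lam ((Context.inclCLM h) (1 : D.carrier)) = 1
        have h3 : (Context.inclCLM h) (1 : D.carrier) = (1 : C.carrier) := rfl
        rw [h3]
        exact map_one lam
      rw [h1] at h2
      exact zero_ne_one h2
    · intro x y
      show lam ((Context.inclCLM h) (x * y)) = lam ((Context.inclCLM h) x) * lam ((Context.inclCLM h) y)
      have h4 : (Context.inclCLM h) (x * y) = (Context.inclCLM h) x * (Context.inclCLM h) y := rfl
      rw [h4]
      exact map_mul lam _ _⟩

/-- The disjoint union of all Gelfand spectra of contexts. -/
abbrev SigmaSpace (A : Type*) [CStarAlgebra A] : Type _ := (C : Context A) × C.Spec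

/-- The topology on the poset of contexts whose opens are the downward closed sets. -/
instance : TopologicalSpace (Context A) where
  IsOpen s := ∀ C ∈ s, ∀ D : Context A, D.carrier ≤ C.carrier → D ∈ s
  isOpen_univ := fun _ _ _ _ => trivial
  isOpen_inter := fun s t hs ht C hC D hD => ⟨hs C hC.1 D hD, ht C hC.2 D hD⟩
  isOpen_sUnion := fun S hS C hC D hD => by
    obtain ⟨s, hsS, hCs⟩ := hC
    exact ⟨s, hsS, hS s hsS C hCs D hD⟩

/-- The topology `𝒪 Σ*` of the contravariant approach: a set is open iff each of its fibres
is open and it is closed under restriction of characters to smaller contexts. -/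
instance : TopologicalSpace (SigmaSpace A) where
  IsOpen U := (∀ C : Context A, IsOpen {lam : C.Spec | Sigma.mk C lam ∈ U}) ∧
    ∀ (C D : Context A) (h : D.carrier ≤ C.carrier) (lam : C.Spec),
      Sigma.mk C lam ∈ U → Sigma.mk D (Context.restrictChar h lam) ∈ U
  isOpen_univ := ⟨fun _ => isOpen_univ, fun _ _ _ _ _ => trivial⟩
  isOpen_inter := fun U V hU hV => ⟨fun C => (hU.1 C).inter (hV.1 C),
    fun C D h lam hm => ⟨hU.2 C D h lam hm.1, hV.2 C D h lam hm.2⟩⟩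
  isOpen_sUnion := fun S hS => by
    constructor
    · intro C
      have h1 : {lam : C.Spec | Sigma.mk C lam ∈ ⋃₀ S} =
          ⋃ U ∈ S, {lam : C.Spec | Sigma.mk C lam ∈ U} := by
        ext lam; simp
      rw [h1]
      exact isOpen_biUnion fun U hU => (hS U hU).1 C
    · rintro C D h lam ⟨U, hUS, hmU⟩
      exact ⟨U, hUS, (hS U hUS).2 C D h lam hmU⟩

variable (A) in
/-- A clopen subobject of the spectral presheaf: a family of clopen subsets of the Gelfand
spectra which is closed under restriction of characters to smaller contexts. -/
structure ClopenSubobject where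
  toFun : ∀ C : Context A, Set C.Spec
  isClopen' : ∀ C : Context A, IsClopen (toFun C)
  restrict_mem' : ∀ (C D : Context A) (h : D.carrier ≤ C.carrier) (lam : C.Spec),
    lam ∈ toFun C → Context.restrictChar h lam ∈ toFun D

/-- The meet of two clopen subobjects, given contextwise by intersection. -/
def ClopenSubobject.inf (S T : ClopenSubobject A) : ClopenSubobject A where
  toFun C := S.toFun C ∩ T.toFun C
  isClopen' C := (S.isClopen' C).inter (T.isClopen' C)
  restrict_mem' C D h lam hm := ⟨S.restrict_mem' C D h lam hm.1, T.restrict_mem' C D h lam hm.2⟩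

/-- The join of two clopen subobjects, given contextwise by union. -/
def ClopenSubobject.sup (S T : ClopenSubobject A) : ClopenSubobject A where
  toFun C := S.toFun C ∪ T.toFun C
  isClopen' C := (S.isClopen' C).union (T.isClopen' C)
  restrict_mem' C D h lam hm := hm.elim (fun h' => Or.inl (S.restrict_mem' C D h lam h'))
    (fun h' => Or.inr (T.restrict_mem' C D h lam h'))

/-- The map `I` sending a clopen subobject to the corresponding subset of `Σ*`. -/
def ClopenSubobject.embed (S : ClopenSubobject A) : Set (SigmaSpace A) :=
  {p : SigmaSpace A | p.2 ∈ S.toFun p.1}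

/-- With the downset topology on contexts: (a) the projection
`π : Σ* → contexts` is continuous; (b) for every clopen subobject `S` of the spectral
presheaf, `I(S)` is open in `Σ*`; (c) `I` is injective and preserves binary meets and joins. -/
theorem statement0 :
    Continuous (fun p : SigmaSpace A => p.1) ∧
    (∀ S : ClopenSubobject A, IsOpen S.embed) ∧
    Function.Injective (ClopenSubobject.embed (A := A)) ∧
    (∀ S T : ClopenSubobject A, (S.inf T).embed = S.embed ∩ T.embed) ∧
    (∀ S T : ClopenSubobject A, (S.sup T).embed = S.embed ∪ T.embed) := by
  refine ⟨?_, ?_, ?_, ?_, ?_⟩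
  · rw [continuous_def]
    intro s hs
    constructor
    · intro C
      by_cases hC : C ∈ s
      · have : {lam : C.Spec | Sigma.mk C lam ∈ (fun p : SigmaSpace A => p.1) ⁻¹' s} = Set.univ := by
          ext lam; simp [hC]
        rw [this]; exact isOpen_univ
      · have : {lam : C.Spec | Sigma.mk C lam ∈ (fun p : SigmaSpace A => p.1) ⁻¹' s} = ∅ := by
          ext lam; simp [hC]
        rw [this]; exact isOpen_empty
    · intro C D h lam hm
      exact hs C hm D h
  · intro S
    exact ⟨fun C => (S.isClopen' C).2, fun C D h lam hm => S.restrict_mem' C D h lam hm⟩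
  · intro S T hST
    obtain ⟨Sf, _, _⟩ := S
    obtain ⟨Tf, _, _⟩ := T
    simp only [ClopenSubobject.mk.injEq]
    funext C
    ext lam
    exact ⟨fun h => Set.ext_iff.mp hST ⟨C, lam⟩ |>.mp h,
      fun h => Set.ext_iff.mp hST ⟨C, lam⟩ |>.mpr h⟩
  · intro S T; rfl
  · intro S T; rfl
end

section
/- Equip the poset of contexts with the lower-set topology (opens = downward closed sets of contexts) and let π : Σ* → contexts be the projection (C,λ) ↦ C. A section s of π, i.e. a function assigning to each context C a character s(C) ∈ Σ_C (viewed as the map C ↦ (C, s(C)) from contexts to Σ*), is continuous if and only if it is a compatible family of characters, i.e. s(D) = s(C)|_D whenever D ⊆ C. Hence the points of the internal locale Σ* correspond exactly to the global sections of the spectral presheaf. -/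
open WeakDual

variable (A : Type*) [CStarAlgebra A]

variable {A}

lemma Context.restrictChar_continuous {D C : Context A} (h : D.carrier ≤ C.carrier) :
    Continuous (Context.restrictChar h : C.Spec → D.Spec) := by
  apply Continuous.subtype_mk
  apply WeakDual.continuous_of_continuous_eval
  intro x
  exact (WeakDual.eval_continuous ((Context.inclCLM h) x)).comp continuous_subtype_val

lemma Context.restrictChar_refl {C : Context A} (lam : C.Spec) :
    Context.restrictChar (le_refl C.carrier) lam = lam := rfl

lemma Context.restrictChar_trans {E D C : Context A} (h1 : E.carrier ≤ D.carrier)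
    (h2 : D.carrier ≤ C.carrier) (lam : C.Spec) :
    Context.restrictChar h1 (Context.restrictChar h2 lam) =
      Context.restrictChar (h1.trans h2) lam := rfl

/-- With the downset topology on contexts, a section of the projection
`π : Σ* → contexts` (assigning to each context `C` a character of `C`) is continuous if and
only if it is a compatible family of characters, i.e. a global section of the spectral
presheaf. -/
theorem statement1 (s : ∀ C : Context A, C.Spec) :
    Continuous (fun C : Context A => (⟨C, s C⟩ : SigmaSpace A)) ↔
      ∀ (C D : Context A) (h : D.carrier ≤ C.carrier), s D = Context.restrictChar h (s C) := by
  constructor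
  · intro hc C D h
    by_contra hne
    -- separate `s D` from `restrictChar h (s C)` by the open set `{s D}ᶜ`
    set U : Set (SigmaSpace A) :=
      {p | ∀ (hDp : D.carrier ≤ p.1.carrier), Context.restrictChar hDp p.2 ≠ s D} with hUdef
    have hUopen : IsOpen U := by
      constructor
      · intro E
        by_cases hDE : D.carrier ≤ E.carrier
        · have : {lam : E.Spec | Sigma.mk E lam ∈ U} =
              (Context.restrictChar hDE) ⁻¹' {s D}ᶜ := by
            ext lam
            simp only [hUdef, Set.mem_setOf_eq, Set.mem_preimage, Set.mem_compl_iff,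
              Set.mem_singleton_iff]
            constructor
            · intro hall; exact hall hDE
            · intro hne' hDp; exact hne'
          rw [this]
          exact (isOpen_compl_singleton).preimage (Context.restrictChar_continuous hDE)
        · have : {lam : E.Spec | Sigma.mk E lam ∈ U} = Set.univ := by
            ext lam
            simp only [hUdef, Set.mem_setOf_eq, Set.mem_univ, iff_true]
            intro hDp; exact absurd hDp hDE
          rw [this]; exact isOpen_univ
      · intro E F hFE lam hmem hDF
        rw [Context.restrictChar_trans]
        exact hmem (hDF.trans hFE)
    have hpre : IsOpen ((fun C : Context A => (⟨C, s C⟩ : SigmaSpace A)) ⁻¹' U) :=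
      hc.isOpen_preimage U hUopen
    have hCU : C ∈ (fun C : Context A => (⟨C, s C⟩ : SigmaSpace A)) ⁻¹' U := by
      intro hDp
      have : Context.restrictChar hDp (s C) = Context.restrictChar h (s C) := rfl
      rw [this]
      exact fun heq => hne heq.symm
    have hDU := hpre C hCU D h
    exact hDU (le_refl D.carrier) (Context.restrictChar_refl (s D))
  · intro hcomp
    rw [continuous_def]
    intro U hU
    intro C hC D hD
    have := hU.2 C D hD (s C) hC
    simpa [Set.mem_preimage, hcomp C D hD] using this
end

section
/- Suppose there exist a context C and two distinct characters λ₁ ≠ λ₂ in Σ_C (equivalently, A possesses a commutative unital C*-subalgebra whose Gelfand spectrum has at least two points). Then the topological space Σ* is not a regular space; nevertheless Σ* satisfies the T0 separation axiom. (Here the trivial context ℂ·1 is included among the contexts.) -/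
open WeakDual

variable (A : Type*) [CStarAlgebra A]

variable {A}

/-- Two contexts with the same carrier are equal. -/
lemma Context.ext' {C D : Context A} (h : C.carrier = D.carrier) : C = D := by
  cases C; cases D; cases h; rfl

/-- The basic open set determined by an element `a` and an open `V ⊆ ℂ`. -/
def evalOpen (a : A) (V : Set ℂ) : Set (SigmaSpace A) :=
  {p | ∀ h : a ∈ p.1.carrier, p.2 ⟨a, h⟩ ∈ V}

lemma isOpen_evalOpen (a : A) {V : Set ℂ} (hV : IsOpen V) :
    IsOpen (evalOpen (A := A) a V) := by
  constructor
  · intro C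
    by_cases ha : a ∈ C.carrier
    · have h1 : {lam : C.Spec | Sigma.mk C lam ∈ evalOpen a V} =
          (fun lam : C.Spec => lam ⟨a, ha⟩) ⁻¹' V := by
        ext lam
        exact ⟨fun h => h ha, fun h h' => h⟩
      rw [h1]
      exact hV.preimage ((WeakDual.eval_continuous _).comp continuous_subtype_val)
    · have h1 : {lam : C.Spec | Sigma.mk C lam ∈ evalOpen a V} = Set.univ := by
        ext lam
        simp only [Set.mem_univ, iff_true, Set.mem_setOf_eq]
        exact fun h => absurd h ha
      rw [h1]
      exact isOpen_univ
  · intro C D h lam hm h'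
    exact hm (h h')

/-- The open set of contexts not containing a given element. -/
def memOpen (a : A) : Set (SigmaSpace A) := {p | a ∉ p.1.carrier}

lemma isOpen_memOpen (a : A) : IsOpen (memOpen (A := A) a) := by
  constructor
  · intro C
    by_cases ha : a ∈ C.carrier
    · have h1 : {lam : C.Spec | Sigma.mk C lam ∈ memOpen a} = ∅ := by
        ext lam; simp [memOpen, ha]
      rw [h1]; exact isOpen_empty
    · have h1 : {lam : C.Spec | Sigma.mk C lam ∈ memOpen a} = Set.univ := by
        ext lam; simp [memOpen, ha]
      rw [h1]; exact isOpen_univ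
  · intro C D h lam hm hc
    exact hm (h hc)

/-- The trivial context `ℂ·1`. -/
def botContext (A : Type*) [CStarAlgebra A] : Context A where
  carrier := ⊥
  star_mem' := by
    intro x hx
    obtain ⟨c, rfl⟩ := Algebra.mem_bot.mp hx
    exact Algebra.mem_bot.mpr ⟨star c, algebraMap_star_comm (R := ℂ) (A := A) c⟩
  isClosed' := by
    have h1 : ((⊥ : Subalgebra ℂ A) : Set A) =
        (Subalgebra.toSubmodule (⊥ : Subalgebra ℂ A) : Set A) := rfl
    rw [h1, Algebra.toSubmodule_bot, Submodule.one_eq_span]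
    haveI : FiniteDimensional ℂ (Submodule.span ℂ ({1} : Set A)) :=
      FiniteDimensional.span_singleton _ _
    exact (Submodule.span ℂ ({1} : Set A)).closed_of_finiteDimensional
  mul_comm' := by
    intro x hx y hy
    obtain ⟨c, rfl⟩ := Algebra.mem_bot.mp hx
    obtain ⟨d, rfl⟩ := Algebra.mem_bot.mp hy
    rw [← map_mul, ← map_mul, mul_comm]

/-- The trivial context has a unique character. -/
lemma botChar_eq (χ ψ : (botContext A).Spec) : χ = ψ := by
  apply Subtype.ext
  apply ContinuousLinearMap.ext
  intro x
  obtain ⟨c, hc⟩ := Algebra.mem_bot.mp x.2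
  have hx : x = algebraMap ℂ (botContext A).carrier c := Subtype.ext hc.symm
  show χ x = ψ x
  rw [hx, AlgHomClass.commutes χ, AlgHomClass.commutes ψ]

/-- Every nonempty open set of `Σ*` contains the point of the trivial context. -/
lemma bot_mem_open {O : Set (SigmaSpace A)} (hO : IsOpen O) {p : SigmaSpace A}
    (hp : p ∈ O) (χ : (botContext A).Spec) : Sigma.mk (botContext A) χ ∈ O := by
  have h := hO.2 p.1 (botContext A) bot_le p.2 hp
  rwa [botChar_eq χ (Context.restrictChar bot_le p.2)]

lemma exists_apply_ne {C : Context A} {l1 l2 : C.Spec} (h : l1 ≠ l2) :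
    ∃ z : C.carrier, l1 z ≠ l2 z := by
  by_contra hcon
  push_neg at hcon
  exact h (Subtype.ext (ContinuousLinearMap.ext hcon))

/-- If some context of `A` has at least two distinct characters, then the
space `Σ*` is not a regular space; nevertheless it is a T₀ space. (The trivial context
`ℂ·1` is included among the contexts.) -/
theorem statement3 (hyp : ∃ (C : Context A) (lam₁ lam₂ : C.Spec), lam₁ ≠ lam₂) :
    ¬ RegularSpace (SigmaSpace A) ∧ T0Space (SigmaSpace A) := by
  constructor
  · intro hreg
    obtain ⟨C, l1, l2, hne⟩ := hyp
    obtain ⟨z, hz⟩ := exists_apply_ne hne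
    set U := evalOpen (A := A) (z : A) {l2 z}ᶜ with hUdef
    have hUo : IsOpen U := isOpen_evalOpen _ isOpen_compl_singleton
    have hx : Sigma.mk C l1 ∈ U := by
      intro h
      have h1 : (⟨(z : A), h⟩ : C.carrier) = z := Subtype.ext rfl
      rw [h1]
      exact hz
    have hy : Sigma.mk C l2 ∉ U := by
      intro h
      have h2 := h z.2
      exact h2 rfl
    have hclosed : IsClosed Uᶜ := hUo.isClosed_compl
    have hdisj := hreg.regular (s := Uᶜ) (a := Sigma.mk C l1) hclosed
      (fun h => h hx)
    rw [Filter.disjoint_iff] at hdisj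
    obtain ⟨s, hs, t, ht, hst⟩ := hdisj
    obtain ⟨O1, hO1o, hO1sub, hO1s⟩ := mem_nhdsSet_iff_exists.mp hs
    obtain ⟨O2, hO2sub, hO2o, hx2⟩ := mem_nhds_iff.mp ht
    obtain ⟨χ⟩ : Nonempty ((botContext A).Spec) :=
      ⟨Context.restrictChar bot_le l1⟩
    have hm1 : Sigma.mk (botContext A) χ ∈ O1 := bot_mem_open hO1o (hO1sub hy) χ
    have hm2 : Sigma.mk (botContext A) χ ∈ O2 := bot_mem_open hO2o hx2 χ
    exact Set.disjoint_left.mp hst (hO1s hm1) (hO2sub hm2)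
  · rw [t0Space_iff_inseparable]
    rintro ⟨C, l1⟩ ⟨D, l2⟩ hins
    rw [inseparable_iff_forall_isOpen] at hins
    have hcar : C.carrier = D.carrier := by
      by_contra hne
      rcases (not_and_or.mp fun h : C.carrier ≤ D.carrier ∧ D.carrier ≤ C.carrier =>
          hne (le_antisymm h.1 h.2)) with h | h
      · obtain ⟨a, haC, haD⟩ := SetLike.not_le_iff_exists.mp h
        have h1 := (hins _ (isOpen_memOpen a)).mpr haD
        exact h1 haC
      · obtain ⟨a, haD, haC⟩ := SetLike.not_le_iff_exists.mp h
        have h1 := (hins _ (isOpen_memOpen a)).mp haC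
        exact h1 haD
    have hCD : C = D := Context.ext' hcar
    subst hCD
    suffices h : l1 = l2 by rw [h]
    by_contra hne
    obtain ⟨z, hz⟩ := exists_apply_ne hne
    have hUo : IsOpen (evalOpen (A := A) (z : A) {l2 z}ᶜ) :=
      isOpen_evalOpen _ isOpen_compl_singleton
    have hx : Sigma.mk C l1 ∈ evalOpen (A := A) (z : A) {l2 z}ᶜ := by
      intro h
      have h1 : (⟨(z : A), h⟩ : C.carrier) = z := Subtype.ext rfl
      rw [h1]
      exact hz
    have h2 := (hins _ hUo).mp hx z.2
    exact h2 rfl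
end

section
/- For every self-adjoint a ∈ C, X_a equals the union of the sets X_b taken over all self-adjoint b ∈ C with the property that for every positive rational q there exists n ∈ ℕ with (b − q·1)⁺ ≤ n·a⁺ (i.e., over all b with D_b ◁ {D_a} in the covering relation of the spectral lattice L_C). -/
open WeakDual
open scoped ComplexOrder

section Helpers

variable {C : Type*} [CommCStarAlgebra C] [PartialOrder C] [StarOrderedRing C]

omit [PartialOrder C] [StarOrderedRing C] in
lemma char_real (lam : characterSpace ℂ C) {x : C} (hx : IsSelfAdjoint x) :
    lam x = ((lam x).re : ℂ) := by
  have : (starRingEnd ℂ) (lam x) = lam x := by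
    rw [← Complex.star_def, ← map_star lam, hx.star_eq]
  exact (Complex.conj_eq_iff_re.mp this).symm

lemma char_nonneg {x : C} (hx : 0 ≤ x) (lam : characterSpace ℂ C) : 0 ≤ lam x :=
  spectrum_nonneg_of_nonneg hx (AlgHom.apply_mem_spectrum (AlgHomClass.toAlgHom lam) x)

lemma char_nonneg_iff {x : C} (hx : IsSelfAdjoint x) :
    0 ≤ x ↔ ∀ lam : characterSpace ℂ C, 0 ≤ lam x := by
  rw [StarOrderedRing.nonneg_iff_spectrum_nonneg (R := ℂ) x hx.isStarNormal]
  constructor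
  · intro h lam; exact h _ (AlgHom.apply_mem_spectrum (AlgHomClass.toAlgHom lam) x)
  · intro h z hz
    obtain ⟨lam, rfl⟩ := WeakDual.CharacterSpace.mem_spectrum_iff_exists.mp hz
    exact h lam

lemma char_posPart {x : C} (hx : IsSelfAdjoint x) (lam : characterSpace ℂ C) :
    lam (x⁺) = ((((lam x).re)⁺ : ℝ) : ℂ) := by
  have hsa : IsSelfAdjoint (lam x) := by
    rw [char_real lam hx]
    simp [IsSelfAdjoint, Complex.star_def]
  have h1 : x⁺ = cfc (·⁺ : ℝ → ℝ) x := by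
    rw [CFC.posPart_def, cfcₙ_eq_cfc]
  rw [h1, StarAlgHomClass.map_cfc (S := ℂ) lam (·⁺ : ℝ → ℝ) x]
  rw [← cfcₙ_eq_cfc, ← CFC.posPart_def]
  rw [char_real lam hx]
  have : ((lam x).re : ℂ) = algebraMap ℝ ℂ (lam x).re := rfl
  rw [this, CFC.posPart_algebraMap]
  rfl

omit [PartialOrder C] [StarOrderedRing C] in
lemma char_smul_one (lam : characterSpace ℂ C) (z : ℂ) : lam (z • (1 : C)) = z := by
  rw [← Algebra.algebraMap_eq_smul_one]
  exact AlgHomClass.commutes lam z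

end Helpers

/-- Let `C` be a commutative unital C*-algebra (equipped with its canonical
order). For every self-adjoint `a ∈ C`, the set `X_a = {λ : λ a > 0}` is the union of the
sets `X_b` over all self-adjoint `b ∈ C` such that for every positive rational `q` there is
an `n ∈ ℕ` with `(b - q·1)⁺ ≤ n • a⁺` (i.e. over all `b` with `D_b ◁ {D_a}`). -/
theorem statement6 {C : Type*} [CommCStarAlgebra C] [PartialOrder C] [StarOrderedRing C]
    (a : C) (ha : IsSelfAdjoint a) :
    {lam : characterSpace ℂ C | 0 < lam a} =
      ⋃ b ∈ {b : C | IsSelfAdjoint b ∧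
          ∀ q : ℚ, 0 < q → ∃ n : ℕ, (b - (q : ℂ) • 1)⁺ ≤ n • a⁺},
        {lam : characterSpace ℂ C | 0 < lam b} := by
  have hq1sa : ∀ q : ℚ, IsSelfAdjoint ((q : ℂ) • (1 : C)) := by
    intro q
    rw [IsSelfAdjoint, star_smul, star_one]
    congr 1
    simp [Complex.ext_iff]
  ext lam
  simp only [Set.mem_setOf_eq, Set.mem_iUnion, exists_prop]
  constructor
  · intro hlam
    refine ⟨a, ⟨ha, fun q hq ↦ ⟨1, ?_⟩⟩, hlam⟩
    rw [one_smul]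
    have hsub : IsSelfAdjoint (a - (q : ℂ) • (1 : C)) := ha.sub (hq1sa q)
    rw [← sub_nonneg, char_nonneg_iff
      (((CFC.posPart_nonneg a).isSelfAdjoint).sub ((CFC.posPart_nonneg _).isSelfAdjoint))]
    intro mu
    rw [map_sub, char_posPart ha mu, char_posPart hsub mu, map_sub, char_smul_one,
      ← Complex.ofReal_sub]
    refine Complex.zero_le_real.mpr ?_
    rw [sub_nonneg]
    refine posPart_mono ?_
    have : ((mu a - (q:ℂ)).re) = (mu a).re - (q:ℝ) := by simp
    rw [this]
    have hq' : (0:ℝ) ≤ (q:ℝ) := by exact_mod_cast hq.le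
    linarith
  · rintro ⟨b, ⟨hb, hcov⟩, hlamb⟩
    have him : (lam a).im = 0 := by
      have := congrArg Complex.im (char_real lam ha)
      simpa using this
    have hre : 0 < (lam b).re := (Complex.lt_def.mp hlamb).1
    obtain ⟨q, hq0, hqlt⟩ := exists_rat_btwn hre
    have hq0' : (0:ℚ) < q := by exact_mod_cast hq0
    obtain ⟨n, hn⟩ := hcov q hq0'
    have hsub : IsSelfAdjoint (b - (q:ℂ) • (1:C)) := hb.sub (hq1sa q)
    have h0 : 0 ≤ lam (n • a⁺ - (b - (q:ℂ) • 1)⁺) :=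
      char_nonneg (sub_nonneg.mpr hn) lam
    rw [map_sub, map_nsmul, char_posPart ha lam, char_posPart hsub lam, map_sub,
      char_smul_one] at h0
    have h0' : ((lam b).re - (q:ℝ))⁺ ≤ (n:ℝ) * ((lam a).re)⁺ := by
      have := (Complex.le_def.mp h0).1
      simpa [nsmul_eq_mul] using this
    have hkey : 0 < ((lam a).re)⁺ := by
      have hpos : 0 < ((lam b).re - (q:ℝ))⁺ := posPart_pos (by linarith)
      nlinarith [posPart_nonneg ((lam a).re)]
    have hposre : 0 < (lam a).re := by
      by_contra h
      push_neg at h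
      rw [posPart_eq_zero.mpr h] at hkey
      exact lt_irrefl 0 hkey
    exact Complex.lt_def.mpr ⟨by simpa using hposre, by simp [him]⟩
end

section
/- Let a = [[0,1],[1,1]], b₁ = [[-1,0],[0,0]], b₂ = [[-1/4,0],[0,-3]], and c = [[-1/4,0],[0,0]] in M₂(ℂ) (so c is the entrywise maximum of the diagonal matrices b₁ and b₂, i.e. their join in the diagonal subalgebra). Then b₁ ≤ a and b₂ ≤ a, and b₁ ≤ c and b₂ ≤ c, but c ≰ a: the matrix a − c is not positive semidefinite; indeed for the vector w = (−i, i)ᵀ one has ⟨w, (a − c)w⟩ = −3/4 < 0. -/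
open Matrix
open scoped ComplexOrder

/-- `a = [[0,1],[1,1]]`. -/
noncomputable def aMat : Matrix (Fin 2) (Fin 2) ℂ := !![0, 1; 1, 1]

/-- `b₁ = [[-1,0],[0,0]]`. -/
noncomputable def b1Mat : Matrix (Fin 2) (Fin 2) ℂ := !![-1, 0; 0, 0]

/-- `b₂ = [[-1/4,0],[0,-3]]`. -/
noncomputable def b2Mat : Matrix (Fin 2) (Fin 2) ℂ := !![-1/4, 0; 0, -3]

/-- `c = [[-1/4,0],[0,0]]`, the entrywise maximum (join in the diagonal subalgebra) of
`b₁` and `b₂`. -/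
noncomputable def cMat : Matrix (Fin 2) (Fin 2) ℂ := !![-1/4, 0; 0, 0]

/-- `w = (-i, i)ᵀ`. -/
noncomputable def wVec : Fin 2 → ℂ := ![-Complex.I, Complex.I]

lemma dot_eval : star wVec ⬝ᵥ ((aMat - cMat) *ᵥ wVec) = -3/4 := by
  simp [aMat, cMat, wVec, mulVec, dotProduct, Fin.sum_univ_two, Matrix.sub_apply]
  ring_nf
  simp [Complex.I_sq]
  ring

/-- In `M₂(ℂ)` with the Loewner order (`x ≤ y` iff `y - x` is positive
semidefinite): `b₁ ≤ a`, `b₂ ≤ a`, `b₁ ≤ c` and `b₂ ≤ c`, but `c ≰ a`; indeed `a - c` is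
not positive semidefinite, since `⟨w, (a - c) w⟩ = -3/4 < 0` for `w = (-i, i)ᵀ`. -/
theorem statement16 :
    (aMat - b1Mat).PosSemidef ∧ (aMat - b2Mat).PosSemidef ∧
    (cMat - b1Mat).PosSemidef ∧ (cMat - b2Mat).PosSemidef ∧
    ¬ (aMat - cMat).PosSemidef ∧
    star wVec ⬝ᵥ ((aMat - cMat) *ᵥ wVec) = -3/4 := by
  refine ⟨?_, ?_, ?_, ?_, ?_, dot_eval⟩
  · have : aMat - b1Mat = (!![1, 1; 0, 0] : Matrix (Fin 2) (Fin 2) ℂ)ᴴ * !![1, 1; 0, 0] := by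
      simp [aMat, b1Mat]
      ext i j
      fin_cases i <;> fin_cases j <;> simp [Matrix.mul_apply, Fin.sum_univ_two] <;> norm_num
    rw [this]; exact posSemidef_conjTranspose_mul_self _
  · have : aMat - b2Mat = (!![1/2, 2; 0, 0] : Matrix (Fin 2) (Fin 2) ℂ)ᴴ * !![1/2, 2; 0, 0] := by
      ext i j
      fin_cases i <;> fin_cases j <;>
        simp [aMat, b2Mat, Matrix.mul_apply, Fin.sum_univ_two] <;> norm_num [Complex.conj_ofNat]
    rw [this]; exact posSemidef_conjTranspose_mul_self _
  · have : cMat - b1Mat = Matrix.diagonal ![3/4, 0] := by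
      ext i j
      fin_cases i <;> fin_cases j <;> simp [cMat, b1Mat, Matrix.diagonal] <;> norm_num
    rw [this]
    refine PosSemidef.diagonal fun i => ?_
    fin_cases i <;> simp [Complex.le_def] <;> norm_num
  · have : cMat - b2Mat = Matrix.diagonal ![0, 3] := by
      ext i j
      fin_cases i <;> fin_cases j <;> simp [cMat, b2Mat, Matrix.diagonal] <;> norm_num
    rw [this]
    refine PosSemidef.diagonal fun i => ?_
    fin_cases i <;> simp [Complex.le_def] <;> norm_num
  · intro h
    have := h.dotProduct_mulVec_nonneg wVec
    rw [dot_eval] at this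
    norm_num [Complex.le_def] at this
end
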